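/- Assume U satisfies Assumption 1 and X satisfies Assumption 2. Then lim_{c→+∞} Γ(c) = −∞. -/

import Mathlib

open MeasureTheory ProbabilityTheory Filter Matrix
open scoped ENNReal NNReal Topology

noncomputable section

/-- Signed expectation with values in `EReal`. -/
def eexp {Ω : Type*} [MeasurableSpace Ω] (P : Measure Ω) (f : Ω → ℝ) : EReal :=
  ((∫⁻ ω, ENNReal.ofReal (f ω) ∂P : ℝ≥0∞) : EReal) -
    ((∫⁻ ω, ENNReal.ofReal (-(f ω)) ∂P : ℝ≥0∞) : EReal)

/-- NMVM return vector `X = μ + γ Z + √Z A N`. -/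
def nmvmX {Ω : Type*} {d : ℕ} (μ γ : Fin d → ℝ) (A : Matrix (Fin d) (Fin d) ℝ)
    (Z : Ω → ℝ) (N : Ω → Fin d → ℝ) (ω : Ω) : Fin d → ℝ :=
  fun i => μ i + γ i * Z ω + Real.sqrt (Z ω) * (A *ᵥ N ω) i

/-- Next-period wealth `W(x) = W₀(1+r_f) + W₀ xᵀ(X − 𝟏 r_f)` of portfolio `x`. -/
def wealth {Ω : Type*} {d : ℕ} (μ γ : Fin d → ℝ) (A : Matrix (Fin d) (Fin d) ℝ)
    (Z : Ω → ℝ) (N : Ω → Fin d → ℝ) (rf W0 : ℝ) (x : Fin d → ℝ) (ω : Ω) : ℝ :=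
  W0 * (1 + rf) + W0 * ∑ i, x i * (nmvmX μ γ A Z N ω i - rf)

/-- The vector `v = μ − 𝟏 r_f + γ E[Z]`. -/
def vVec {Ω : Type*} [MeasurableSpace Ω] (P : Measure Ω) {d : ℕ}
    (μ γ : Fin d → ℝ) (rf : ℝ) (Z : Ω → ℝ) : Fin d → ℝ :=
  fun i => μ i - rf + γ i * ∫ ω, Z ω ∂P

/-- The quadratic form `vᵀ Σ⁻¹ v`. -/
def vSv {Ω : Type*} [MeasurableSpace Ω] (P : Measure Ω) {d : ℕ}
    (μ γ : Fin d → ℝ) (rf : ℝ) (A : Matrix (Fin d) (Fin d) ℝ) (Z : Ω → ℝ) : ℝ :=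
  vVec P μ γ rf Z ⬝ᵥ ((A * Aᵀ)⁻¹ *ᵥ vVec P μ γ rf Z)

/-- `α = vᵀΣ⁻¹(μ − 𝟏 r_f)/(vᵀΣ⁻¹v)`. -/
def alphaC {Ω : Type*} [MeasurableSpace Ω] (P : Measure Ω) {d : ℕ}
    (μ γ : Fin d → ℝ) (rf : ℝ) (A : Matrix (Fin d) (Fin d) ℝ) (Z : Ω → ℝ) : ℝ :=
  (vVec P μ γ rf Z ⬝ᵥ ((A * Aᵀ)⁻¹ *ᵥ fun i => μ i - rf)) / vSv P μ γ rf A Z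

/-- `β = vᵀΣ⁻¹γ/(vᵀΣ⁻¹v)`. -/
def betaC {Ω : Type*} [MeasurableSpace Ω] (P : Measure Ω) {d : ℕ}
    (μ γ : Fin d → ℝ) (rf : ℝ) (A : Matrix (Fin d) (Fin d) ℝ) (Z : Ω → ℝ) : ℝ :=
  (vVec P μ γ rf Z ⬝ᵥ ((A * Aᵀ)⁻¹ *ᵥ γ)) / vSv P μ γ rf A Z

/-- `σ = 1/√(vᵀΣ⁻¹v)`. -/
def sigmaC {Ω : Type*} [MeasurableSpace Ω] (P : Measure Ω) {d : ℕ}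
    (μ γ : Fin d → ℝ) (rf : ℝ) (A : Matrix (Fin d) (Fin d) ℝ) (Z : Ω → ℝ) : ℝ :=
  1 / Real.sqrt (vSv P μ γ rf A Z)

/-- `Γ(c) = E[U(W₀(1+r_f) + W₀ c (α + β Z + σ √Z N₁))]`, valued in `EReal`. -/
def GammaFun {Ω : Type*} [MeasurableSpace Ω] (P : Measure Ω) {d : ℕ}
    (μ γ : Fin d → ℝ) (rf : ℝ) (A : Matrix (Fin d) (Fin d) ℝ) (Z : Ω → ℝ)
    (N1 : Ω → ℝ) (W0 : ℝ) (U : ℝ → ℝ) (c : ℝ) : EReal :=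
  eexp P fun ω => U (W0 * (1 + rf) + W0 * c *
    (alphaC P μ γ rf A Z + betaC P μ γ rf A Z * Z ω +
      sigmaC P μ γ rf A Z * Real.sqrt (Z ω) * N1 ω))

lemma key_lemma {Ω : Type*} [MeasurableSpace Ω] (P : Measure Ω) [IsProbabilityMeasure P]
    (g : Ω → ℝ) (hg : Measurable g) (S : Set Ω) (hS : MeasurableSet S) (hpS : 0 < P S)
    (hgS : ∀ ω ∈ S, g ω ≤ -1) (rf W0 : ℝ) (hW0 : 0 < W0)
    (U : ℝ → ℝ) (hUcont : Continuous U) (hUmono : Monotone U)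
    (hUbdd : BddAbove (Set.range U)) (hUbot : Tendsto U atBot atBot) :
    Tendsto (fun c => eexp P fun ω => U (W0 * (1 + rf) + W0 * c * g ω)) atTop (𝓝 (⊥ : EReal)) := by
  obtain ⟨M, hM⟩ := hUbdd
  set M₀ : ℝ := max M 0 with hM₀def
  have hUM : ∀ w, U w ≤ M₀ := fun w => le_trans (hM ⟨w, rfl⟩) (le_max_left _ _)
  have hM₀ : 0 ≤ M₀ := le_max_right _ _
  set p : ℝ := (P S).toReal with hpdef
  have hPSne : P S ≠ ⊤ := (measure_lt_top P S).ne
  have hp : 0 < p := ENNReal.toReal_pos hpS.ne' hPSne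
  rw [EReal.tendsto_nhds_bot_iff_real]
  intro R
  set T : ℝ := (max 0 (M₀ - R) + 1) / p with hTdef
  have hT : 0 < T := by positivity
  have hTp : T * p = max 0 (M₀ - R) + 1 := div_mul_cancel₀ _ hp.ne'
  have hMTR : M₀ - T * p < R := by
    have : M₀ - R ≤ max 0 (M₀ - R) := le_max_right _ _
    rw [hTp]; linarith
  obtain ⟨w₀, hw₀⟩ : ∃ w₀ : ℝ, ∀ w ≤ w₀, U w ≤ -T :=
    eventually_atBot.mp (tendsto_atBot.mp hUbot (-T))
  filter_upwards [eventually_ge_atTop (max 0 ((W0 * (1 + rf) - w₀) / W0))] with c hc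
  have hc0 : 0 ≤ c := le_trans (le_max_left _ _) hc
  have hcW : W0 * (1 + rf) - w₀ ≤ W0 * c := by
    have h1 : (W0 * (1 + rf) - w₀) / W0 ≤ c := le_trans (le_max_right _ _) hc
    calc W0 * (1 + rf) - w₀ = ((W0 * (1 + rf) - w₀) / W0) * W0 := by
          field_simp
      _ ≤ c * W0 := mul_le_mul_of_nonneg_right h1 hW0.le
      _ = W0 * c := mul_comm _ _
  have hfS : ∀ ω ∈ S, U (W0 * (1 + rf) + W0 * c * g ω) ≤ -T := by
    intro ω hω
    apply hw₀
    have h1 : W0 * c * g ω ≤ W0 * c * (-1) :=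
      mul_le_mul_of_nonneg_left (hgS ω hω) (by positivity)
    nlinarith
  have hfm : Measurable fun ω => U (W0 * (1 + rf) + W0 * c * g ω) := by
    exact hUcont.measurable.comp (by fun_prop)
  set f : Ω → ℝ := fun ω => U (W0 * (1 + rf) + W0 * c * g ω) with hf
  have hpos : (∫⁻ ω, ENNReal.ofReal (f ω) ∂P) ≤ ENNReal.ofReal M₀ := by
    calc (∫⁻ ω, ENNReal.ofReal (f ω) ∂P) ≤ ∫⁻ _, ENNReal.ofReal M₀ ∂P :=
          lintegral_mono fun ω => ENNReal.ofReal_le_ofReal (hUM _)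
      _ = ENNReal.ofReal M₀ := by simp
  have hneg : ENNReal.ofReal (T * p) ≤ ∫⁻ ω, ENNReal.ofReal (-(f ω)) ∂P := by
    calc ENNReal.ofReal (T * p) = ENNReal.ofReal T * ENNReal.ofReal p :=
          ENNReal.ofReal_mul hT.le
      _ = ENNReal.ofReal T * P S := by rw [hpdef, ENNReal.ofReal_toReal hPSne]
      _ = ∫⁻ _ in S, ENNReal.ofReal T ∂P := (setLIntegral_const S _).symm
      _ ≤ ∫⁻ ω in S, ENNReal.ofReal (-(f ω)) ∂P := by
          refine setLIntegral_mono (by fun_prop) fun ω hω => ?_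
          exact ENNReal.ofReal_le_ofReal (by linarith [hfS ω hω])
      _ ≤ ∫⁻ ω, ENNReal.ofReal (-(f ω)) ∂P := setLIntegral_le_lintegral S _
  show eexp P f < (R : EReal)
  rw [eexp]
  calc ((∫⁻ ω, ENNReal.ofReal (f ω) ∂P : ℝ≥0∞) : EReal) -
        ((∫⁻ ω, ENNReal.ofReal (-(f ω)) ∂P : ℝ≥0∞) : EReal)
      ≤ ((ENNReal.ofReal M₀ : ℝ≥0∞) : EReal) - ((ENNReal.ofReal (T * p) : ℝ≥0∞) : EReal) :=
        EReal.sub_le_sub (EReal.coe_ennreal_le_coe_ennreal_iff.2 hpos)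
          (EReal.coe_ennreal_le_coe_ennreal_iff.2 hneg)
    _ = ((M₀ : EReal)) - ((T * p : ℝ) : EReal) := by
        rw [EReal.coe_ennreal_ofReal, EReal.coe_ennreal_ofReal,
          max_eq_left hM₀, max_eq_left (by positivity : (0:ℝ) ≤ T * p)]
    _ = ((M₀ - T * p : ℝ) : EReal) := by rw [EReal.coe_sub]
    _ < (R : EReal) := EReal.coe_lt_coe_iff.2 hMTR


/-- under Assumptions 1 and 2, `Γ(c) → −∞` as `c → +∞`. -/
theorem stmt10 {Ω : Type*} [MeasurableSpace Ω] (P : Measure Ω) [IsProbabilityMeasure P]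
    {d : ℕ} (μ γ : Fin d → ℝ) (A : Matrix (Fin d) (Fin d) ℝ)
    (Z : Ω → ℝ) (N : Ω → Fin d → ℝ) (N1 : Ω → ℝ)
    (hZmeas : Measurable Z) (hNmeas : Measurable N) (hN1meas : Measurable N1)
    (hNlaw : Measure.map N P = Measure.pi fun _ : Fin d => gaussianReal 0 1)
    (hindep : IndepFun Z N P)
    (hN1law : Measure.map N1 P = gaussianReal 0 1)
    (hindep1 : IndepFun Z N1 P)
    (hPD : (A * Aᵀ).PosDef)
    (rf W0 : ℝ) (hW0 : 0 < W0)
    -- Assumption 1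
    (U : ℝ → ℝ) (hUcont : Continuous U) (hUmono : Monotone U)
    (hUnonconst : ∃ w w' : ℝ, U w ≠ U w') (hUbdd : BddAbove (Set.range U))
    (hUbot : Tendsto U atBot atBot)
    -- Assumption 2
    (hZpos : ∀ ω, 0 < Z ω)
    (hZk : ∃ k : ℕ, 1 ≤ k ∧ (∫⁻ ω, ENNReal.ofReal (Z ω ^ k) ∂P) < ⊤)
    (hv : vVec P μ γ rf Z ≠ 0) :
    Tendsto (fun c => GammaFun P μ γ rf A Z N1 W0 U c) atTop (𝓝 (⊥ : EReal)) := by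
  set a := alphaC P μ γ rf A Z with ha
  set b := betaC P μ γ rf A Z with hb
  set s := sigmaC P μ γ rf A Z with hs
  -- σ > 0
  have hvSv : 0 < vSv P μ γ rf A Z := by
    have := hPD.inv.dotProduct_mulVec_pos hv
    simpa [vSv] using this
  have hσ : 0 < s := by
    rw [hs, sigmaC]
    have := Real.sqrt_pos.mpr hvSv
    positivity
  -- interval for Z with positive probability
  obtain ⟨n, hn⟩ : ∃ n : ℕ, P (Z ⁻¹' Set.Ioo ((n + 1 : ℝ)⁻¹) (n + 1)) ≠ 0 := by
    by_contra h
    push_neg at h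
    have hU : (⋃ n : ℕ, Z ⁻¹' Set.Ioo ((n + 1 : ℝ)⁻¹) (n + 1)) = Set.univ := by
      apply Set.eq_univ_of_forall
      intro ω
      obtain ⟨m, hm⟩ := exists_nat_gt (max (Z ω) (Z ω)⁻¹)
      have h1 : Z ω < m + 1 := lt_trans (lt_of_le_of_lt (le_max_left _ _) hm) (by linarith)
      have h2 : (Z ω)⁻¹ < m + 1 := lt_trans (lt_of_le_of_lt (le_max_right _ _) hm) (by linarith)
      have h3 : (m + 1 : ℝ)⁻¹ < Z ω := by
        have := inv_strictAnti₀ (inv_pos.mpr (hZpos ω)) h2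
        rwa [inv_inv] at this
      exact Set.mem_iUnion.mpr ⟨m, h3, h1⟩
    have h0 : P (⋃ n : ℕ, Z ⁻¹' Set.Ioo ((n + 1 : ℝ)⁻¹) (n + 1)) = 0 := measure_iUnion_null h
    rw [hU, measure_univ] at h0
    simp at h0
  set C : ℝ := |a| + |b| * (n + 1) with hC
  have hC0 : 0 ≤ C := by positivity
  set K : ℝ := (C + 1) * Real.sqrt (n + 1) / s with hK
  have hsqn : 0 < Real.sqrt (n + 1) := Real.sqrt_pos.mpr (by positivity)
  have hK0 : 0 < K := by positivity
  set S : Set Ω := Z ⁻¹' Set.Ioo ((n + 1 : ℝ)⁻¹) (n + 1) ∩ N1 ⁻¹' Set.Iio (-K) with hSdef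
  have hSmeas : MeasurableSet S :=
    (hZmeas measurableSet_Ioo).inter (hN1meas measurableSet_Iio)
  -- positive probability of S
  have hpS : 0 < P S := by
    rw [hSdef, hindep1.measure_inter_preimage_eq_mul _ _ measurableSet_Ioo measurableSet_Iio]
    refine ENNReal.mul_pos hn ?_
    rw [← Measure.map_apply hN1meas measurableSet_Iio, hN1law]
    refine ne_of_gt ?_
    rw [gaussianReal_apply 0 one_ne_zero]
    rw [lintegral_pos_iff_support (measurable_gaussianPDF _ _)]
    have hsupp : Function.support (gaussianPDF 0 1) = Set.univ :=
      Set.eq_univ_of_forall fun x => (gaussianPDF_pos 0 one_ne_zero x).ne'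
    rw [hsupp, Measure.restrict_apply_univ, Real.volume_Iio]
    exact ENNReal.zero_lt_top
  -- the bound on S
  have hgS : ∀ ω ∈ S, a + b * Z ω + s * Real.sqrt (Z ω) * N1 ω ≤ -1 := by
    rintro ω ⟨hZω, hN1ω⟩
    simp only [Set.mem_preimage, Set.mem_Ioo] at hZω
    simp only [Set.mem_preimage, Set.mem_Iio] at hN1ω
    have hZ0 : 0 < Z ω := hZpos ω
    have hab : a + b * Z ω ≤ C := by
      have h1 : a ≤ |a| := le_abs_self a
      have h2 : b * Z ω ≤ |b| * Z ω := mul_le_mul_of_nonneg_right (le_abs_self b) hZ0.le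
      have h3 : |b| * Z ω ≤ |b| * (n + 1) :=
        mul_le_mul_of_nonneg_left hZω.2.le (abs_nonneg b)
      rw [hC]; linarith
    have hsqZ : (Real.sqrt (n + 1))⁻¹ ≤ Real.sqrt (Z ω) := by
      rw [← Real.sqrt_inv]
      exact Real.sqrt_le_sqrt hZω.1.le
    have hN1neg : N1 ω ≤ 0 := le_trans hN1ω.le (by linarith)
    have hu0 : 0 < s * (Real.sqrt (n + 1))⁻¹ := by positivity
    have hstep1 : s * Real.sqrt (Z ω) * N1 ω ≤ s * (Real.sqrt (n + 1))⁻¹ * N1 ω := by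
      apply mul_le_mul_of_nonpos_right _ hN1neg
      exact mul_le_mul_of_nonneg_left hsqZ hσ.le
    have hstep2 : s * (Real.sqrt (n + 1))⁻¹ * N1 ω ≤ s * (Real.sqrt (n + 1))⁻¹ * (-K) :=
      mul_le_mul_of_nonneg_left hN1ω.le hu0.le
    have hstep3 : s * (Real.sqrt (n + 1))⁻¹ * (-K) = -(C + 1) := by
      rw [hK]
      field_simp
    linarith
  have hη : Measurable fun ω => a + b * Z ω + s * Real.sqrt (Z ω) * N1 ω := by fun_prop
  exact key_lemma P _ hη S hSmeas hpS hgS rf W0 hW0 U hUcont hUmono hUbdd hUbot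


end
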